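/- Let k and m be positive integers with 2^(k-1) ≤ m < 2^k, and let μ = (2^(2k)) div m. For any nonnegative integer x < 2^(2k), the quantity q₃ = ((x div 2^(k-1)) * μ) div 2^(k+1) satisfies (x div m) - 2 ≤ q₃ ≤ x div m. -/

import Mathlib

/-- Barrett quotient estimation: for `2^(k-1) ≤ m < 2^k`, `μ = 2^(2k) / m`,
and `x < 2^(2k)`, the estimate `q₃ = ((x / 2^(k-1)) * μ) / 2^(k+1)` satisfies
`x / m - 2 ≤ q₃ ≤ x / m`. -/
theorem barrett_quotient_estimate (k m : ℕ) (hk : 0 < k) (hm : 0 < m)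
    (h1 : 2 ^ (k - 1) ≤ m) (h2 : m < 2 ^ k) (x : ℕ) (hx : x < 2 ^ (2 * k)) :
    x / m ≤ ((x / 2 ^ (k - 1)) * (2 ^ (2 * k) / m)) / 2 ^ (k + 1) + 2 ∧
      ((x / 2 ^ (k - 1)) * (2 ^ (2 * k) / m)) / 2 ^ (k + 1) ≤ x / m := by
  set a := 2 ^ (k - 1) with ha_def
  set b := 2 ^ (k + 1) with hb_def
  set A := 2 ^ (2 * k) with hA_def
  have hab : a * b = A := by rw [ha_def, hb_def, hA_def, ← pow_add]; congr 1; omega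
  have ha0 : 0 < a := Nat.pow_pos (by norm_num)
  have hb0 : 0 < b := Nat.pow_pos (by norm_num)
  have hA0 : 0 < A := Nat.pow_pos (by norm_num)
  set μ := A / m with hμ_def
  set q := x / a with hq_def
  set q₃ := q * μ / b with hq3_def
  constructor
  · -- lower bound: x / m ≤ q₃ + 2
    have hlt : x / m < q₃ + 3 := by
      rw [Nat.div_lt_iff_lt_mul hm]
      have e1 : a * q + x % a = x := Nat.div_add_mod x a
      have e1' : x % a < a := Nat.mod_lt _ ha0
      have e2 : m * μ + A % m = A := Nat.div_add_mod A m
      have e2' : A % m < m := Nat.mod_lt _ hm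
      have e3 : b * q₃ + (q * μ) % b = q * μ := Nat.div_add_mod (q * μ) b
      have e3' : (q * μ) % b < b := Nat.mod_lt _ hb0
      have hqb : q < b := by
        rw [hq_def, Nat.div_lt_iff_lt_mul ha0]
        calc x < A := hx
          _ = b * a := by rw [← hab, mul_comm]
      have hmbA : A ≤ m * b := by
        calc A = a * b := hab.symm
          _ ≤ m * b := Nat.mul_le_mul_right _ h1
      -- products needed
      have p1 : q * m ≤ b * m := Nat.mul_le_mul_right m hqb.le
      have p2 : q * A ≤ q * (m * μ + A % m) := by rw [e2]
      have p3 : m * (b * q₃ + (q * μ) % b) = m * (q * μ) := by rw [e3]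
      have p4 : x * b < (a * q + a) * b := by
        have : x < a * q + a := by omega
        exact (Nat.mul_lt_mul_right hb0).mpr this
      have key : x * b < ((q₃ + 3) * m) * b := by nlinarith [p1, p2, p3, p4]
      exact lt_of_mul_lt_mul_right key (le_of_lt hb0)
    omega
  · -- upper bound
    calc q * μ / b ≤ x * A / (a * m) / b := by
          gcongr
          exact Nat.div_mul_div_le x a A m
      _ = x * A / (m * A) := by
          rw [Nat.div_div_eq_div_mul]
          congr 1
          rw [mul_comm a m, mul_assoc, hab]
      _ = x / m := Nat.mul_div_mul_right x m hA0
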